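/- Let n ≥ 1 be an integer. For every valid configuration c ∈ Ω'_n there exist strictly increasing maps A, B : ℤ → ℤ such that the set of positions of junction tiles in c is the Cartesian product c^{-1}(J'_n) = A(ℤ) × B(ℤ), and for every k ∈ ℤ one has A(k+1) − A(k) ∈ {n, n+1} and B(k+1) − B(k) ∈ {n, n+1}. -/

import Mathlib

structure WangTile (C : Type*) where
  right : C
  top : C
  left : C
  bottom : C
deriving DecidableEq

abbrev Lbl : Type := ℤ × ℤ × ℤ

def Vn (n : ℤ) : Set Lbl :=
  {v | 0 ≤ v.1 ∧ v.1 ≤ v.2.1 ∧ v.2.1 ≤ 1 ∧ v.2.1 ≤ v.2.2 ∧ v.2.2 ≤ n + 1}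

def hatT {C : Type*} (t : WangTile C) : WangTile C :=
  ⟨t.top, t.right, t.bottom, t.left⟩

def whiteTiles (n : ℤ) : Set (WangTile Lbl) :=
  {t | ∃ i j : ℤ, 1 ≤ i ∧ i ≤ n ∧ 1 ≤ j ∧ j ≤ n ∧
    t = ⟨(1, 1, i + 1), (1, 1, j + 1), (1, 1, i), (1, 1, j)⟩}

def blueH (n : ℤ) : Set (WangTile Lbl) :=
  {t | ∃ i : ℤ, 0 ≤ i ∧ i ≤ n ∧ t = ⟨(0, 0, i + 1), (1, 1, 1), (0, 0, i), (1, 1, n)⟩}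

def greenH (n : ℤ) : Set (WangTile Lbl) :=
  {t | ∃ i : ℤ, 0 ≤ i ∧ i ≤ n ∧ t = ⟨(0, 1, i + 1), (1, 1, 1), (0, 0, i), (1, 1, n + 1)⟩}

def yellowH (n : ℤ) : Set (WangTile Lbl) :=
  {t | ∃ i : ℤ, 1 ≤ i ∧ i ≤ n ∧ t = ⟨(0, 1, i + 1), (1, 1, 2), (0, 1, i), (1, 1, n + 1)⟩}

def antiH (n : ℤ) : Set (WangTile Lbl) :=
  {t | ∃ i : ℤ, 1 ≤ i ∧ i ≤ n ∧ t = ⟨(0, 0, i + 1), (1, 1, 2), (0, 1, i), (1, 1, n)⟩}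

def junctionTile (n k l r s : ℤ) : WangTile Lbl :=
  ⟨(0, k, l), (0, r, s), (0, s, r + n), (0, l, k + n)⟩

def jPairs : Set (ℤ × ℤ) := {(0, 0), (0, 1), (1, 1)}

def junctions (n : ℤ) : Set (WangTile Lbl) :=
  {t | ∃ k l r s : ℤ, (k, l) ∈ jPairs ∧ (r, s) ∈ jPairs ∧ t = junctionTile n k l r s}

def Text (n : ℤ) : Set (WangTile Lbl) :=
  whiteTiles n ∪ blueH n ∪ greenH n ∪ yellowH n ∪ antiH n ∪
    hatT '' blueH n ∪ hatT '' greenH n ∪ hatT '' yellowH n ∪ hatT '' antiH n ∪ junctions n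

def Dset (n : ℤ) : Set (WangTile Lbl) :=
  {(⟨(0, 0, n + 1), (1, 1, 1), (0, 0, n), (1, 1, n)⟩ : WangTile Lbl),
    hatT (⟨(0, 0, n + 1), (1, 1, 1), (0, 0, n), (1, 1, n)⟩ : WangTile Lbl),
    junctionTile n 0 0 1 1, junctionTile n 1 1 0 0}

def Tmet (n : ℤ) : Set (WangTile Lbl) :=
  Text n \ (antiH n ∪ hatT '' antiH n ∪ Dset n)

def ValidConfig {C : Type*} (T : Set (WangTile C)) (x : ℤ × ℤ → WangTile C) : Prop :=
  (∀ m, x m ∈ T) ∧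
    (∀ m : ℤ × ℤ, (x m).right = (x (m.1 + 1, m.2)).left) ∧
    (∀ m : ℤ × ℤ, (x m).top = (x (m.1, m.2 + 1)).bottom)

def ValidPattern {C : Type*} (T : Set (WangTile C)) (w h : ℕ) (p : ℕ → ℕ → WangTile C) : Prop :=
  (∀ i j, i < w → j < h → p i j ∈ T) ∧
    (∀ i j, i + 1 < w → j < h → (p i j).right = (p (i + 1) j).left) ∧
    (∀ i j, i < w → j + 1 < h → (p i j).top = (p i (j + 1)).bottom)

def bottomWord {C : Type*} (w : ℕ) (p : ℕ → ℕ → WangTile C) : List C :=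
  (List.range w).map fun i => (p i 0).bottom

def topWord {C : Type*} (w h : ℕ) (p : ℕ → ℕ → WangTile C) : List C :=
  (List.range w).map fun i => (p i (h - 1)).top

def leftWord {C : Type*} (h : ℕ) (p : ℕ → ℕ → WangTile C) : List C :=
  (List.range h).map fun j => (p 0 j).left

def rightWord {C : Type*} (w h : ℕ) (p : ℕ → ℕ → WangTile C) : List C :=
  (List.range h).map fun j => (p (w - 1) j).right

def tau (n : ℤ) (v : Lbl) : List Lbl :=
  if v.1 = v.2.2 then
    (0, v.1 - v.2.1 + 1, n + 1) :: List.replicate (n - v.2.2).toNat (1, 1, n + 1)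
  else
    (0, v.1 - v.2.1 + 1, n) ::
      (List.replicate (v.2.2 - v.1 - 1).toNat (1, 1, n) ++
        List.replicate (n + 1 - v.2.2).toNat (1, 1, n + 1))



lemma enumZ {n : ℤ} (hn : 1 ≤ n) (S : Set ℤ) (hne : S.Nonempty)
    (hup : ∀ x ∈ S, ∃ y ∈ S, x < y) (hdown : ∀ x ∈ S, ∃ y ∈ S, y < x)
    (hgap : ∀ x ∈ S, ∀ z ∈ S, x < z → (∀ w ∈ S, x < w → ¬ w < z) →
       z - x = n ∨ z - x = n + 1) :
    ∃ A : ℤ → ℤ, StrictMono A ∧ Set.range A = S ∧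
      ∀ k : ℤ, A (k + 1) - A k = n ∨ A (k + 1) - A k = n + 1 := by
  classical
  obtain ⟨x0, hx0⟩ := hne
  have hN : ∀ x : ℤ, ∃ y : ℤ, x ∈ S → y ∈ S ∧ x < y ∧ ∀ z ∈ S, x < z → y ≤ z := by
    intro x
    by_cases hx : x ∈ S
    · obtain ⟨lb, hlb, hlbm⟩ := Int.exists_least_of_bdd (P := fun z => z ∈ S ∧ x < z)
        ⟨x, fun z hz => le_of_lt hz.2⟩ (by obtain ⟨y, hy, hxy⟩ := hup x hx; exact ⟨y, hy, hxy⟩)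
      exact ⟨lb, fun _ => ⟨hlb.1, hlb.2, fun z hz hxz => hlbm z ⟨hz, hxz⟩⟩⟩
    · exact ⟨0, fun h => absurd h hx⟩
  choose nxt hnxt using hN
  have hP : ∀ x : ℤ, ∃ y : ℤ, x ∈ S → y ∈ S ∧ y < x ∧ ∀ z ∈ S, z < x → z ≤ y := by
    intro x
    by_cases hx : x ∈ S
    · obtain ⟨ub, hub, hubm⟩ := Int.exists_greatest_of_bdd (P := fun z => z ∈ S ∧ z < x)
        ⟨x, fun z hz => le_of_lt hz.2⟩ (by obtain ⟨y, hy, hxy⟩ := hdown x hx; exact ⟨y, hy, hxy⟩)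
      exact ⟨ub, fun _ => ⟨hub.1, hub.2, fun z hz hxz => hubm z ⟨hz, hxz⟩⟩⟩
    · exact ⟨0, fun h => absurd h hx⟩
  choose prv hprv using hP
  have nxt_prv : ∀ z ∈ S, nxt (prv z) = z := by
    intro z hz
    obtain ⟨hpS, hplt, hpmax⟩ := hprv z hz
    obtain ⟨hqS, hqgt, hqmin⟩ := hnxt (prv z) hpS
    have h1 : nxt (prv z) ≤ z := hqmin z hz hplt
    rcases lt_or_eq_of_le h1 with h2 | h2
    · exact absurd (hpmax _ hqS h2) (not_le.mpr hqgt)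
    · exact h2
  set f : ℕ → ℤ := fun m => nxt^[m] x0 with hf
  set g : ℕ → ℤ := fun m => prv^[m] x0 with hg
  have hfs : ∀ m : ℕ, f (m + 1) = nxt (f m) := fun m => Function.iterate_succ_apply' nxt m x0
  have hgs : ∀ m : ℕ, g (m + 1) = prv (g m) := fun m => Function.iterate_succ_apply' prv m x0
  have hfmem : ∀ m, f m ∈ S := by
    intro m; induction m with
    | zero => exact hx0
    | succ m ih => rw [hfs]; exact (hnxt _ ih).1
  have hgmem : ∀ m, g m ∈ S := by
    intro m; induction m with
    | zero => exact hx0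
    | succ m ih => rw [hgs]; exact (hprv _ ih).1
  set A : ℤ → ℤ := fun k => if 0 ≤ k then f k.toNat else g (-k).toNat with hA
  have hAmem : ∀ k, A k ∈ S := by
    intro k; by_cases h : 0 ≤ k
    · simp only [hA, if_pos h]; exact hfmem _
    · simp only [hA, if_neg h]; exact hgmem _
  have hsucc : ∀ k : ℤ, A (k + 1) = nxt (A k) := by
    intro k
    rcases lt_trichotomy k (-1) with hk | hk | hk
    · have h1 : ¬ 0 ≤ k := by omega
      have h2 : ¬ 0 ≤ k + 1 := by omega
      have h3 : (-k).toNat = (-(k+1)).toNat + 1 := by omega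
      have : A k = prv (A (k+1)) := by
        simp only [hA, if_neg h1, if_neg h2, h3]; exact hgs _
      rw [this, nxt_prv _ (hAmem (k+1))]
    · subst hk
      have : A (-1 : ℤ) = prv x0 := by norm_num [hA, hgs 0, hg]
      rw [this, nxt_prv _ hx0]
      norm_num [hA, hf]
    · have h1 : 0 ≤ k := by omega
      have h2 : 0 ≤ k + 1 := by omega
      have h3 : (k+1).toNat = k.toNat + 1 := by omega
      simp only [hA, if_pos h1, if_pos h2, h3]; exact hfs _
  have hlt : ∀ k : ℤ, A k < A (k + 1) := by
    intro k; rw [hsucc]; exact (hnxt _ (hAmem k)).2.1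
  have hgaps : ∀ k : ℤ, A (k + 1) - A k = n ∨ A (k + 1) - A k = n + 1 := by
    intro k
    refine hgap (A k) (hAmem k) (A (k+1)) (hAmem (k+1)) (hlt k) ?_
    intro w hw hlt'
    rw [hsucc]
    exact not_lt.mpr ((hnxt _ (hAmem k)).2.2 w hw hlt')
  have hmono : StrictMono A := strictMono_int_of_lt_succ hlt
  refine ⟨A, hmono, ?_, hgaps⟩
  apply Set.eq_of_subset_of_subset
  · rintro _ ⟨k, rfl⟩; exact hAmem k
  · intro s hs
    have grow_upN : ∀ m : ℕ, A 0 + m ≤ A (m : ℤ) := by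
      intro m; induction m with
      | zero => simp
      | succ m ih =>
        have h1 := hlt (m : ℤ)
        have h3 : ((m+1 : ℕ) : ℤ) = (m : ℤ) + 1 := by push_cast; ring
        rw [h3]; omega
    have grow_up : ∀ k : ℤ, 0 ≤ k → A 0 + k ≤ A k := by
      intro k hk
      have := grow_upN k.toNat
      have h3 : ((k.toNat : ℕ) : ℤ) = k := by omega
      rw [h3] at this; omega
    have grow_down : ∀ m : ℕ, A (-(m : ℤ)) ≤ A 0 - m := by
      intro m; induction m with
      | zero => simp
      | succ m ih =>
        have h1 := hlt (-(m:ℤ) - 1)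
        have h2 : (-(m:ℤ) - 1) + 1 = -(m:ℤ) := by ring
        rw [h2] at h1
        have h3 : (-(↑(m+1) : ℤ)) = -(m:ℤ) - 1 := by push_cast; ring
        rw [h3]; omega
    have hKne : ∃ k : ℤ, A k ≤ s := by
      refine ⟨-(((A 0 - s).toNat : ℕ) : ℤ), ?_⟩
      have := grow_down (A 0 - s).toNat
      have : ((A 0 - s).toNat : ℤ) ≥ A 0 - s := by omega
      have := grow_down (A 0 - s).toNat
      omega
    have hKbd : ∃ b : ℤ, ∀ k : ℤ, A k ≤ s → k ≤ b := by
      refine ⟨max (s - A 0) 0, ?_⟩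
      intro k hk
      by_contra hcon
      push_neg at hcon
      have h0 : 0 ≤ k := by omega
      have := grow_up k h0
      omega
    obtain ⟨b, hb⟩ := hKbd
    obtain ⟨k, hk, hkmax⟩ := Int.exists_greatest_of_bdd (P := fun k => A k ≤ s) ⟨b, hb⟩ hKne
    have h1 : s < A (k + 1) := by
      by_contra hcon
      push_neg at hcon
      have := hkmax (k+1) hcon
      omega
    have h2 : s ≤ A k := by
      by_contra hcon
      push_neg at hcon
      have := (hnxt _ (hAmem k)).2.2 s hs hcon
      rw [← hsucc] at this
      omega
    exact ⟨k, le_antisymm hk h2⟩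

lemma pair_facts {k l : ℤ} (h : (k, l) ∈ jPairs) : 0 ≤ k ∧ k ≤ l ∧ l ≤ 1 := by
  simp only [jPairs, Set.mem_insert_iff, Set.mem_singleton_iff, Prod.mk.injEq] at h
  rcases h with ⟨rfl, rfl⟩ | ⟨rfl, rfl⟩ | ⟨rfl, rfl⟩ <;> omega

lemma mem_jPairs {k l : ℤ} (h0 : 0 ≤ k) (h1 : k ≤ l) (h2 : l ≤ 1) : (k, l) ∈ jPairs := by
  have hk : k = 0 ∨ k = 1 := by omega
  have hl : l = 0 ∨ l = 1 := by omega
  rcases hk with rfl | rfl <;> rcases hl with rfl | rfl <;> simp_all [jPairs] <;> omega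

def IsHorizT (n : ℤ) (t : WangTile Lbl) : Prop :=
  ∃ a b i : ℤ, 0 ≤ a ∧ a ≤ 1 ∧ 0 ≤ b ∧ b ≤ 1 ∧ a ≤ i ∧ 0 ≤ i ∧ i ≤ n ∧
    t = ⟨(0, b, i + 1), (1, 1, 1 + a), (0, a, i), (1, 1, n + b)⟩

def IsVertT (n : ℤ) (t : WangTile Lbl) : Prop :=
  ∃ a b i : ℤ, 0 ≤ a ∧ a ≤ 1 ∧ 0 ≤ b ∧ b ≤ 1 ∧ a ≤ i ∧ 0 ≤ i ∧ i ≤ n ∧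
    t = ⟨(1, 1, 1 + a), (0, b, i + 1), (1, 1, n + b), (0, a, i)⟩

lemma hatT_horiz {n : ℤ} {t : WangTile Lbl} (h : IsHorizT n t) : IsVertT n (hatT t) := by
  obtain ⟨a, b, i, h1, h2, h3, h4, h5, h6, h7, rfl⟩ := h
  exact ⟨a, b, i, h1, h2, h3, h4, h5, h6, h7, rfl⟩

lemma classify {n : ℤ} (hn : 1 ≤ n) {t : WangTile Lbl} (ht : t ∈ Text n) :
    (t ∈ whiteTiles n) ∨ IsHorizT n t ∨ IsVertT n t ∨ t ∈ junctions n := by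
  rcases ht with ((((((((hw | hb) | hg) | hy) | ha) | hb') | hg') | hy') | ha') | hj
  · exact Or.inl hw
  · obtain ⟨i, h1, h2, rfl⟩ := hb
    exact Or.inr (Or.inl ⟨0, 0, i, by norm_num, by norm_num, by norm_num, by norm_num, h1, h1, h2, by norm_num⟩)
  · obtain ⟨i, h1, h2, rfl⟩ := hg
    exact Or.inr (Or.inl ⟨0, 1, i, by norm_num, by norm_num, by norm_num, by norm_num, h1, h1, h2, by norm_num⟩)
  · obtain ⟨i, h1, h2, rfl⟩ := hy
    exact Or.inr (Or.inl ⟨1, 1, i, by norm_num, by norm_num, by norm_num, by norm_num, h1, by omega, h2, by norm_num⟩)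
  · obtain ⟨i, h1, h2, rfl⟩ := ha
    exact Or.inr (Or.inl ⟨1, 0, i, by norm_num, by norm_num, by norm_num, by norm_num, h1, by omega, h2, by norm_num⟩)
  · obtain ⟨s, hs, rfl⟩ := hb'
    obtain ⟨i, h1, h2, rfl⟩ := hs
    exact Or.inr (Or.inr (Or.inl ⟨0, 0, i, by norm_num, by norm_num, by norm_num, by norm_num, h1, h1, h2, by norm_num [hatT]⟩))
  · obtain ⟨s, hs, rfl⟩ := hg'
    obtain ⟨i, h1, h2, rfl⟩ := hs
    exact Or.inr (Or.inr (Or.inl ⟨0, 1, i, by norm_num, by norm_num, by norm_num, by norm_num, h1, h1, h2, by norm_num [hatT]⟩))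
  · obtain ⟨s, hs, rfl⟩ := hy'
    obtain ⟨i, h1, h2, rfl⟩ := hs
    exact Or.inr (Or.inr (Or.inl ⟨1, 1, i, by norm_num, by norm_num, by norm_num, by norm_num, h1, by omega, h2, by norm_num [hatT]⟩))
  · obtain ⟨s, hs, rfl⟩ := ha'
    obtain ⟨i, h1, h2, rfl⟩ := hs
    exact Or.inr (Or.inr (Or.inl ⟨1, 0, i, by norm_num, by norm_num, by norm_num, by norm_num, h1, by omega, h2, by norm_num [hatT]⟩))
  · exact Or.inr (Or.inr (Or.inr hj))

lemma firstCoords {n : ℤ} (hn : 1 ≤ n) {t : WangTile Lbl} (ht : t ∈ Text n) :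
    t.right.1 = t.left.1 ∧ t.top.1 = t.bottom.1 ∧ (t.left.1 = 0 ∨ t.left.1 = 1) ∧
      (t.bottom.1 = 0 ∨ t.bottom.1 = 1) := by
  rcases classify hn ht with h | h | h | h
  · obtain ⟨i, j, _, _, _, _, rfl⟩ := h; simp
  · obtain ⟨a, b, i, _, _, _, _, _, _, _, rfl⟩ := h; simp
  · obtain ⟨a, b, i, _, _, _, _, _, _, _, rfl⟩ := h; simp
  · obtain ⟨k, l, r, s, _, _, rfl⟩ := h; simp [junctionTile]

lemma hatT_hatT (t : WangTile Lbl) : hatT (hatT t) = t := rfl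

lemma hatT_mem {n : ℤ} {t : WangTile Lbl} (ht : t ∈ Text n) : hatT t ∈ Text n := by
  rcases ht with ((((((((hw | hb) | hg) | hy) | ha) | hb') | hg') | hy') | ha') | hj
  · obtain ⟨i, j, h1, h2, h3, h4, rfl⟩ := hw
    exact Or.inl <| Or.inl <| Or.inl <| Or.inl <| Or.inl <| Or.inl <| Or.inl <| Or.inl <| Or.inl
      ⟨j, i, h3, h4, h1, h2, rfl⟩
  · exact Or.inl <| Or.inl <| Or.inl <| Or.inl (Or.inr ⟨t, hb, rfl⟩)
  · exact Or.inl <| Or.inl <| Or.inl (Or.inr ⟨t, hg, rfl⟩)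
  · exact Or.inl <| Or.inl (Or.inr ⟨t, hy, rfl⟩)
  · exact Or.inl (Or.inr ⟨t, ha, rfl⟩)
  · obtain ⟨s, hs, rfl⟩ := hb'
    rw [hatT_hatT]
    exact Or.inl <| Or.inl <| Or.inl <| Or.inl <| Or.inl <| Or.inl <| Or.inl <| Or.inl <| Or.inr hs
  · obtain ⟨s, hs, rfl⟩ := hg'
    rw [hatT_hatT]
    exact Or.inl <| Or.inl <| Or.inl <| Or.inl <| Or.inl <| Or.inl <| Or.inl (Or.inr hs)
  · obtain ⟨s, hs, rfl⟩ := hy'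
    rw [hatT_hatT]
    exact Or.inl <| Or.inl <| Or.inl <| Or.inl <| Or.inl <| Or.inl (Or.inr hs)
  · obtain ⟨s, hs, rfl⟩ := ha'
    rw [hatT_hatT]
    exact Or.inl <| Or.inl <| Or.inl <| Or.inl <| Or.inl (Or.inr hs)
  · obtain ⟨k, l, r, s, hkl, hrs, rfl⟩ := hj
    exact Or.inr ⟨r, s, k, l, hrs, hkl, rfl⟩

lemma transpose_valid {n : ℤ} {c : ℤ × ℤ → WangTile Lbl} (hc : ValidConfig (Text n) c) :
    ValidConfig (Text n) (fun m => hatT (c (m.2, m.1))) := by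
  refine ⟨fun m => hatT_mem (hc.1 _), fun m => ?_, fun m => ?_⟩
  · exact hc.2.2 (m.2, m.1)
  · exact hc.2.1 (m.2, m.1)

lemma rowc {n : ℤ} (hn1 : 1 ≤ n) {c : ℤ × ℤ → WangTile Lbl} (hc : ValidConfig (Text n) c)
    (y : ℤ) : ∀ x : ℤ, (c (x, y)).left.1 = (c (0, y)).left.1 := by
  intro x
  induction x using Int.induction_on with
  | zero => rfl
  | succ i ih =>
    have e := hc.2.1 ((i : ℤ), y)
    have f := (firstCoords hn1 (hc.1 ((i : ℤ), y))).1
    simp only [] at e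
    rw [← e, f]; exact ih
  | pred i ih =>
    have e := hc.2.1 ((-(i : ℤ) - 1), y)
    have f := (firstCoords hn1 (hc.1 ((-(i : ℤ) - 1), y))).1
    have h2 : (-(i : ℤ) - 1) + 1 = -(i : ℤ) := by ring
    rw [h2] at e
    rw [← f, e]; exact ih

lemma colc {n : ℤ} (hn1 : 1 ≤ n) {c : ℤ × ℤ → WangTile Lbl} (hc : ValidConfig (Text n) c)
    (x : ℤ) : ∀ y : ℤ, (c (x, y)).bottom.1 = (c (x, 0)).bottom.1 := by
  intro y
  induction y using Int.induction_on with
  | zero => rfl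
  | succ i ih =>
    have e := hc.2.2 (x, (i : ℤ))
    have f := (firstCoords hn1 (hc.1 (x, (i : ℤ)))).2.1
    rw [← e, f]; exact ih
  | pred i ih =>
    have e := hc.2.2 (x, (-(i : ℤ) - 1))
    have f := (firstCoords hn1 (hc.1 (x, (-(i : ℤ) - 1)))).2.1
    have h2 : (-(i : ℤ) - 1) + 1 = -(i : ℤ) := by ring
    rw [h2] at e
    rw [← f, e]; exact ih

lemma posJ {n : ℤ} (hn1 : 1 ≤ n) {c : ℤ × ℤ → WangTile Lbl} (hc : ValidConfig (Text n) c)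
    (x y : ℤ) (hy : (c (0, y)).left.1 = 0) (hx : (c (x, 0)).bottom.1 = 0) :
    c (x, y) ∈ junctions n := by
  have hl : (c (x, y)).left.1 = 0 := by rw [rowc hn1 hc y x, hy]
  have hb : (c (x, y)).bottom.1 = 0 := by rw [colc hn1 hc x y, hx]
  rcases classify hn1 (hc.1 (x, y)) with h | h | h | h
  · obtain ⟨i, j, _, _, _, _, he⟩ := h; rw [he] at hl; simp at hl
  · obtain ⟨a, b, i, _, _, _, _, _, _, _, he⟩ := h; rw [he] at hb; simp at hb
  · obtain ⟨a, b, i, _, _, _, _, _, _, _, he⟩ := h; rw [he] at hl; simp at hl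
  · exact h

lemma posHz {n : ℤ} (hn1 : 1 ≤ n) {c : ℤ × ℤ → WangTile Lbl} (hc : ValidConfig (Text n) c)
    (x y : ℤ) (hy : (c (0, y)).left.1 = 0) (hx : (c (x, 0)).bottom.1 = 1) :
    IsHorizT n (c (x, y)) := by
  have hl : (c (x, y)).left.1 = 0 := by rw [rowc hn1 hc y x, hy]
  have hb : (c (x, y)).bottom.1 = 1 := by rw [colc hn1 hc x y, hx]
  rcases classify hn1 (hc.1 (x, y)) with h | h | h | h
  · obtain ⟨i, j, _, _, _, _, he⟩ := h; rw [he] at hl; simp at hl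
  · exact h
  · obtain ⟨a, b, i, _, _, _, _, _, _, _, he⟩ := h; rw [he] at hl; simp at hl
  · obtain ⟨k, l, r, s, _, _, he⟩ := h; rw [he] at hb; simp [junctionTile] at hb

lemma posW {n : ℤ} (hn1 : 1 ≤ n) {c : ℤ × ℤ → WangTile Lbl} (hc : ValidConfig (Text n) c)
    (x y : ℤ) (hy : (c (0, y)).left.1 = 1) (hx : (c (x, 0)).bottom.1 = 1) :
    c (x, y) ∈ whiteTiles n := by
  have hl : (c (x, y)).left.1 = 1 := by rw [rowc hn1 hc y x, hy]
  have hb : (c (x, y)).bottom.1 = 1 := by rw [colc hn1 hc x y, hx]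
  rcases classify hn1 (hc.1 (x, y)) with h | h | h | h
  · exact h
  · obtain ⟨a, b, i, _, _, _, _, _, _, _, he⟩ := h; rw [he] at hl; simp at hl
  · obtain ⟨a, b, i, _, _, _, _, _, _, _, he⟩ := h; rw [he] at hb; simp at hb
  · obtain ⟨k, l, r, s, _, _, he⟩ := h; rw [he] at hl; simp [junctionTile] at hl

lemma posV {n : ℤ} (hn1 : 1 ≤ n) {c : ℤ × ℤ → WangTile Lbl} (hc : ValidConfig (Text n) c)
    (x y : ℤ) (hy : (c (0, y)).left.1 = 1) (hx : (c (x, 0)).bottom.1 = 0) :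
    IsVertT n (c (x, y)) := by
  have hl : (c (x, y)).left.1 = 1 := by rw [rowc hn1 hc y x, hy]
  have hb : (c (x, y)).bottom.1 = 0 := by rw [colc hn1 hc x y, hx]
  rcases classify hn1 (hc.1 (x, y)) with h | h | h | h
  · obtain ⟨i, j, _, _, _, _, he⟩ := h; rw [he] at hb; simp at hb
  · obtain ⟨a, b, i, _, _, _, _, _, _, _, he⟩ := h; rw [he] at hb; simp at hb
  · exact h
  · obtain ⟨k, l, r, s, _, _, he⟩ := h; rw [he] at hl; simp [junctionTile] at hl

lemma chain_addN (L : ℤ → ℤ) (a : ℤ) :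
    ∀ d : ℕ, (∀ w : ℤ, a ≤ w → w < a + d → L (w + 1) = L w + 1) → L (a + d) = L a + d := by
  intro d
  induction d with
  | zero => intro _; simp
  | succ m ih =>
    intro hstep
    have e1 : L (a + m + 1) = L (a + m) + 1 := hstep (a + m) (by omega) (by push_cast; omega)
    have e2 := ih (fun w hw hwb => hstep w hw (by push_cast at hwb ⊢; omega))
    have h3 : a + ((m + 1 : ℕ) : ℤ) = a + (m : ℤ) + 1 := by push_cast; ring
    rw [h3, e1, e2]
    push_cast; ring

lemma chain_add (L : ℤ → ℤ) (a : ℤ) :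
    ∀ b : ℤ, a ≤ b → (∀ w : ℤ, a ≤ w → w < b → L (w + 1) = L w + 1) → L b = L a + (b - a) := by
  intro b hb hstep
  have h1 : a + ((b - a).toNat : ℤ) = b := by omega
  have := chain_addN L a (b - a).toNat (fun w hw hwb => hstep w hw (by omega))
  rw [h1] at this
  omega

/-- Horizontal tile in a junction row: left-third increments, bounded. -/
lemma Lstep {n : ℤ} (hn1 : 1 ≤ n) {c : ℤ × ℤ → WangTile Lbl} (hc : ValidConfig (Text n) c)
    (x y : ℤ) (hy : (c (0, y)).left.1 = 0) (hx : (c (x, 0)).bottom.1 = 1) :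
    (c (x + 1, y)).left.2.2 = (c (x, y)).left.2.2 + 1 ∧
      0 ≤ (c (x, y)).left.2.2 ∧ (c (x, y)).left.2.2 ≤ n := by
  obtain ⟨a, b, i, h1, h2, h3, h4, h5, h6, h7, he⟩ := posHz hn1 hc x y hy hx
  have e := hc.2.1 (x, y)
  simp only [] at e
  rw [he] at e
  refine ⟨?_, ?_, ?_⟩
  · rw [← e, he]
  · rw [he]; simpa using by omega
  · rw [he]; simpa using h7

/-- Junction tile: bounds on its own left third and on the left third of its right neighbour. -/
lemma Jbounds {n : ℤ} (hn1 : 1 ≤ n) {c : ℤ × ℤ → WangTile Lbl} (hc : ValidConfig (Text n) c)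
    (x y : ℤ) (hy : (c (0, y)).left.1 = 0) (hx : (c (x, 0)).bottom.1 = 0) :
    (n ≤ (c (x, y)).left.2.2 ∧ (c (x, y)).left.2.2 ≤ n + 1) ∧
      (0 ≤ (c (x + 1, y)).left.2.2 ∧ (c (x + 1, y)).left.2.2 ≤ 1) := by
  obtain ⟨k, l, r, s, hkl, hrs, he⟩ := posJ hn1 hc x y hy hx
  obtain ⟨hk0, hkl', hl1⟩ := pair_facts hkl
  obtain ⟨hr0, hrs', hs1⟩ := pair_facts hrs
  have e := hc.2.1 (x, y)
  simp only [] at e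
  rw [he] at e
  constructor
  · rw [he]; simp only [junctionTile]; constructor <;> omega
  · rw [← e]; simp only [junctionTile]; constructor <;> omega

/-- White tile in a white row: left-third increments, bounded. -/
lemma Wstep {n : ℤ} (hn1 : 1 ≤ n) {c : ℤ × ℤ → WangTile Lbl} (hc : ValidConfig (Text n) c)
    (x y : ℤ) (hy : (c (0, y)).left.1 = 1) (hx : (c (x, 0)).bottom.1 = 1) :
    (c (x + 1, y)).left.2.2 = (c (x, y)).left.2.2 + 1 ∧
      1 ≤ (c (x, y)).left.2.2 ∧ (c (x, y)).left.2.2 ≤ n := by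
  obtain ⟨i, j, h1, h2, h3, h4, he⟩ := posW hn1 hc x y hy hx
  have e := hc.2.1 (x, y)
  simp only [] at e
  rw [he] at e
  refine ⟨?_, ?_, ?_⟩
  · rw [← e, he]
  · rw [he]; simpa using h1
  · rw [he]; simpa using h2

/-- Vertical tile in a white row: bounds on thirds. -/
lemma Vbounds {n : ℤ} (hn1 : 1 ≤ n) {c : ℤ × ℤ → WangTile Lbl} (hc : ValidConfig (Text n) c)
    (x y : ℤ) (hy : (c (0, y)).left.1 = 1) (hx : (c (x, 0)).bottom.1 = 0) :
    (n ≤ (c (x, y)).left.2.2 ∧ (c (x, y)).left.2.2 ≤ n + 1) ∧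
      (1 ≤ (c (x + 1, y)).left.2.2 ∧ (c (x + 1, y)).left.2.2 ≤ 2) := by
  obtain ⟨a, b, i, h1, h2, h3, h4, h5, h6, h7, he⟩ := posV hn1 hc x y hy hx
  have e := hc.2.1 (x, y)
  simp only [] at e
  rw [he] at e
  constructor
  · rw [he]; constructor <;> simpa using by omega
  · rw [← e]; constructor <;> simpa using by omega

lemma vbin {n : ℤ} (hn1 : 1 ≤ n) {c : ℤ × ℤ → WangTile Lbl} (hc : ValidConfig (Text n) c)
    (x : ℤ) : (c (x, 0)).bottom.1 = 0 ∨ (c (x, 0)).bottom.1 = 1 :=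
  (firstCoords hn1 (hc.1 (x, 0))).2.2.2

lemma hbin {n : ℤ} (hn1 : 1 ≤ n) {c : ℤ × ℤ → WangTile Lbl} (hc : ValidConfig (Text n) c)
    (y : ℤ) : (c (0, y)).left.1 = 0 ∨ (c (0, y)).left.1 = 1 :=
  (firstCoords hn1 (hc.1 (0, y))).2.2.1

/-- density of vertical-type columns, seen from a junction row -/
lemma rowDense {n : ℤ} (hn1 : 1 ≤ n) {c : ℤ × ℤ → WangTile Lbl} (hc : ValidConfig (Text n) c)
    (y : ℤ) (hy : (c (0, y)).left.1 = 0) (x : ℤ) :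
    ∃ t : ℤ, 0 ≤ t ∧ t ≤ n + 1 ∧ (c (x + t, 0)).bottom.1 = 0 := by
  by_contra hcon
  push_neg at hcon
  have hv1 : ∀ t : ℤ, 0 ≤ t → t ≤ n + 1 → (c (x + t, 0)).bottom.1 = 1 := by
    intro t h1 h2
    rcases vbin hn1 hc (x + t) with h | h
    · exact absurd h (hcon t h1 h2)
    · exact h
  set L : ℤ → ℤ := fun z => (c (z, y)).left.2.2 with hL
  have hch := chain_add L x (x + (n + 1)) (by omega) (fun w hw hwb => by
    have hv := hv1 (w - x) (by omega) (by omega)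
    have : x + (w - x) = w := by ring
    rw [this] at hv
    exact (Lstep hn1 hc w y hy hv).1)
  have hb1 := (Lstep hn1 hc x y hy (by
    have := hv1 0 le_rfl (by omega); rwa [add_zero] at this)).2.1
  have hb2 := (Lstep hn1 hc (x + (n + 1)) y hy (hv1 (n + 1) (by omega) le_rfl)).2.2
  simp only [hL] at hb1 hb2 hch
  omega

/-- chain equality between consecutive junction columns along any junction row -/
lemma gapEq {n : ℤ} (hn1 : 1 ≤ n) {c : ℤ × ℤ → WangTile Lbl} (hc : ValidConfig (Text n) c)
    (x0 x1 y : ℤ) (hy : (c (0, y)).left.1 = 0) (hlt : x0 < x1)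
    (hbet : ∀ w : ℤ, x0 < w → w < x1 → (c (w, 0)).bottom.1 = 1) :
    (c (x1, y)).left.2.2 = (c (x0 + 1, y)).left.2.2 + (x1 - x0 - 1) := by
  have := chain_add (fun z => (c (z, y)).left.2.2) (x0 + 1) x1 (by omega)
    (fun w hw hwb => (Lstep hn1 hc w y hy (hbet w (by omega) hwb)).1)
  simpa using by linarith [this]

lemma jrow_exists {n : ℤ} (hn1 : 1 ≤ n) {c : ℤ × ℤ → WangTile Lbl} (hc : ValidConfig (Text n) c)
    : ∃ y : ℤ, (c (0, y)).left.1 = 0 := by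
  by_contra hcon
  push_neg at hcon
  have hall : ∀ y : ℤ, (c (0, y)).left.1 = 1 := by
    intro y
    rcases hbin hn1 hc y with h | h
    · exact absurd h (hcon y)
    · exact h
  set M : ℤ → ℤ := fun y => (c (0, y)).bottom.2.2 with hM
  rcases vbin hn1 hc 0 with h0 | h0
  · -- column 0 all vertical tiles
    have step : ∀ y : ℤ, M (y + 1) = M y + 1 ∧ 0 ≤ M y ∧ M y ≤ n := by
      intro y
      obtain ⟨a, b, i, h1, h2, h3, h4, h5, h6, h7, he⟩ := posV hn1 hc 0 y (hall y) h0
      have e := hc.2.2 (0, y)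
      simp only [] at e
      rw [he] at e
      refine ⟨?_, ?_, ?_⟩
      · simp only [hM]; rw [← e, he]
      · simp only [hM]; rw [he]; simpa using by omega
      · simp only [hM]; rw [he]; simpa using h7
    have hch := chain_add M 0 (n + 1) (by omega) (fun w _ _ => (step w).1)
    have hb1 := (step 0).2.1
    have hb2 := (step (n + 1)).2.2
    omega
  · -- column 0 all white tiles
    have step : ∀ y : ℤ, M (y + 1) = M y + 1 ∧ 1 ≤ M y ∧ M y ≤ n := by
      intro y
      obtain ⟨i, j, h1, h2, h3, h4, he⟩ := posW hn1 hc 0 y (hall y) h0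
      have e := hc.2.2 (0, y)
      simp only [] at e
      rw [he] at e
      refine ⟨?_, ?_, ?_⟩
      · simp only [hM]; rw [← e, he]
      · simp only [hM]; rw [he]; simpa using h3
      · simp only [hM]; rw [he]; simpa using h4
    have hch := chain_add M 0 (n + 1) (by omega) (fun w _ _ => (step w).1)
    have hb1 := (step 0).2.1
    have hb2 := (step (n + 1)).2.2
    omega


lemma noBig {n : ℤ} (hn1 : 1 ≤ n) {c : ℤ × ℤ → WangTile Lbl} (hc : ValidConfig (Text n) c)
    (x0 x1 : ℤ) (h0 : (c (x0, 0)).bottom.1 = 0) (h1 : (c (x1, 0)).bottom.1 = 0)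
    (hlt : x0 < x1) (hbet : ∀ w : ℤ, x0 < w → w < x1 → (c (w, 0)).bottom.1 = 1) :
    x1 - x0 ≤ n + 1 := by
  by_cases hwr : ∃ yw : ℤ, (c (0, yw)).left.1 = 1
  · obtain ⟨yw, hyw⟩ := hwr
    have hch := chain_add (fun z => (c (z, yw)).left.2.2) (x0 + 1) x1 (by omega)
      (fun w hw' hwb => (Wstep hn1 hc w yw hyw (hbet w (by omega) hwb)).1)
    have b1 := (Vbounds hn1 hc x0 yw hyw h0).2.1
    have b2 := (Vbounds hn1 hc x1 yw hyw h1).1.2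
    omega
  · push_neg at hwr
    have hall : ∀ y : ℤ, (c (0, y)).left.1 = 0 := fun y => by
      rcases hbin hn1 hc y with h | h
      · exact h
      · exact absurd h (hwr y)
    by_contra hbig
    push_neg at hbig
    have key : ∀ y : ℤ, (c (x0 + 1, y)).left.2.2 = 0 ∧ (c (x1, y)).left.2.2 = n + 1 ∧
        x1 - x0 = n + 2 := by
      intro y
      have hch := gapEq hn1 hc x0 x1 y (hall y) hlt hbet
      have b0 := (Jbounds hn1 hc x0 y (hall y) h0).2
      have b1 := (Jbounds hn1 hc x1 y (hall y) h1).1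
      refine ⟨by omega, by omega, by omega⟩
    have hgap2 : x1 - x0 = n + 2 := (key 0).2.2
    -- junction at (x0,0): right label (0,k,l) with l = 0 hence k = 0
    obtain ⟨k, l, r, s, hkl, hrs, he⟩ := posJ hn1 hc x0 0 (hall 0) h0
    obtain ⟨hk0, hkl', hl1⟩ := pair_facts hkl
    have e := hc.2.1 (x0, 0)
    simp only [] at e
    rw [he] at e
    have hl0 : l = 0 := by
      have h' := (key 0).1
      rw [← e] at h'
      simpa [junctionTile] using h'
    have hk00 : k = 0 := by omega
    have e' : (c (x0 + 1, 0)).left = (0, 0, 0) := by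
      rw [← e]; simp [junctionTile, hl0, hk00]
    -- horizontal tile at (x0+1, 0)
    have hx01 : (c (x0 + 1, 0)).bottom.1 = 1 := hbet (x0 + 1) (by omega) (by omega)
    obtain ⟨a0, b0, i0, g1, g2, g3, g4, g5, g6, g7, he0⟩ := posHz hn1 hc (x0 + 1) 0 (hall 0) hx01
    rw [he0] at e'
    simp only [Prod.mk.injEq] at e'
    have ha0 : a0 = 0 := e'.2.1
    -- vertical matching to (x0+1, 1)
    have ev := hc.2.2 (x0 + 1, 0)
    simp only [] at ev
    have h01 : (0 : ℤ) + 1 = 1 := by norm_num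
    rw [h01] at ev
    rw [he0] at ev
    obtain ⟨a1, b1, i1, f1, f2, f3, f4, f5, f6, f7, he1⟩ := posHz hn1 hc (x0 + 1) 1 (hall 1) hx01
    rw [he1] at ev
    simp only [Prod.mk.injEq] at ev
    have hb1 : 1 + a0 = n + b1 := ev.2.2
    have hn2 : n = 1 := by omega
    have hb10 : b1 = 0 := by omega
    have hi1 : i1 = 0 := by
      have h' := (key 1).1
      rw [he1] at h'
      simpa using h'
    -- horizontal matching to (x0+2, 1)
    have e2 := hc.2.1 (x0 + 1, 1)
    simp only [] at e2
    rw [he1] at e2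
    have hxx : x0 + 1 + 1 = x0 + 2 := by ring
    rw [hxx] at e2
    have hx02 : (c (x0 + 2, 0)).bottom.1 = 1 := hbet (x0 + 2) (by omega) (by omega)
    obtain ⟨a2, b2, i2, q1, q2, q3, q4, q5, q6, q7, he2⟩ := posHz hn1 hc (x0 + 2) 1 (hall 1) hx02
    rw [he2] at e2
    simp only [Prod.mk.injEq] at e2
    have ha2 : a2 = b1 := e2.2.1.symm
    -- vertical matching to (x0+2, 2)
    have ev2 := hc.2.2 (x0 + 2, 1)
    simp only [] at ev2
    rw [he2] at ev2
    have h12 : (1 : ℤ) + 1 = 2 := by norm_num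
    rw [h12] at ev2
    obtain ⟨a3, b3, i3, p1, p2, p3, p4, p5, p6, p7, he3⟩ := posHz hn1 hc (x0 + 2) 2 (hall 2) hx02
    rw [he3] at ev2
    simp only [Prod.mk.injEq] at ev2
    have hb3 : 1 + a2 = n + b3 := ev2.2.2
    have hb30 : b3 = 0 := by omega
    -- left third of (x0+2, 2) equals 1
    have hstep2 := (Lstep hn1 hc (x0 + 1) 2 (hall 2) hx01).1
    rw [hxx] at hstep2
    have hi3 : i3 = 1 := by
      have h' := (key 2).1
      rw [he3] at hstep2
      simp only [] at hstep2
      omega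
    -- horizontal matching (x0+2, 2) to (x1, 2)
    have e4 := hc.2.1 (x0 + 2, 2)
    simp only [] at e4
    rw [he3] at e4
    have hxx2 : x0 + 2 + 1 = x1 := by omega
    rw [hxx2] at e4
    obtain ⟨k', l', r', s', hkl2, hrs2, he4⟩ := posJ hn1 hc x1 2 (hall 2) h1
    obtain ⟨hr0', hrs2', hs1'⟩ := pair_facts hrs2
    rw [he4] at e4
    simp only [junctionTile, Prod.mk.injEq] at e4
    -- e4 : ... b3 = s' ∧ i3 + 1 = r' + n
    have hs' : s' = b3 := e4.2.1.symm
    have hr' : i3 + 1 = r' + n := e4.2.2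
    omega

lemma half {n : ℤ} (hn1 : 1 ≤ n) {c : ℤ × ℤ → WangTile Lbl} (hc : ValidConfig (Text n) c) :
    ∃ A : ℤ → ℤ, StrictMono A ∧ Set.range A = {x : ℤ | (c (x, 0)).bottom.1 = 0} ∧
      ∀ k : ℤ, A (k + 1) - A k = n ∨ A (k + 1) - A k = n + 1 := by
  obtain ⟨ys, hys⟩ := jrow_exists hn1 hc
  set S : Set ℤ := {x : ℤ | (c (x, 0)).bottom.1 = 0} with hS
  have hne : S.Nonempty := by
    obtain ⟨t, _, _, h⟩ := rowDense hn1 hc ys hys 0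
    exact ⟨0 + t, h⟩
  have hup : ∀ x ∈ S, ∃ y ∈ S, x < y := by
    intro x _
    obtain ⟨t, h1, _, h3⟩ := rowDense hn1 hc ys hys (x + 1)
    exact ⟨x + 1 + t, h3, by omega⟩
  have hdown : ∀ x ∈ S, ∃ y ∈ S, y < x := by
    intro x _
    obtain ⟨t, h1, h2, h3⟩ := rowDense hn1 hc ys hys (x - (n + 2))
    exact ⟨x - (n + 2) + t, h3, by omega⟩
  have hgap : ∀ x ∈ S, ∀ z ∈ S, x < z → (∀ w ∈ S, x < w → ¬ w < z) →
      z - x = n ∨ z - x = n + 1 := by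
    intro x hx z hz hxz hno
    have hbet : ∀ w : ℤ, x < w → w < z → (c (w, 0)).bottom.1 = 1 := by
      intro w hw1 hw2
      rcases vbin hn1 hc w with h | h
      · exact absurd hw2 (hno w h hw1)
      · exact h
    have hch := gapEq hn1 hc x z ys hys hxz hbet
    have b0 := (Jbounds hn1 hc x ys hys hx).2
    have b1 := (Jbounds hn1 hc z ys hys hz).1
    have hub := noBig hn1 hc x z hx hz hxz hbet
    omega
  obtain ⟨A, h1, h2, h3⟩ := enumZ hn1 S hne hup hdown hgap
  exact ⟨A, h1, h2, h3⟩
/-- in every configuration of `Ω'_n`, the positions of junction tiles form a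
Cartesian product `A(ℤ) × B(ℤ)` with gaps `n` or `n+1`. -/
theorem stmt10 (n : ℤ) (hn : 1 ≤ n) (c : ℤ × ℤ → WangTile Lbl)
    (hc : ValidConfig (Text n) c) :
    ∃ A B : ℤ → ℤ, StrictMono A ∧ StrictMono B ∧
      {m : ℤ × ℤ | c m ∈ junctions n} = Set.range A ×ˢ Set.range B ∧
      (∀ k : ℤ, A (k + 1) - A k = n ∨ A (k + 1) - A k = n + 1) ∧
      (∀ k : ℤ, B (k + 1) - B k = n ∨ B (k + 1) - B k = n + 1) := by
  obtain ⟨A, hAm, hAr, hAg⟩ := half hn hc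
  have hctv := transpose_valid hc
  obtain ⟨B, hBm, hBr, hBg⟩ := half hn hctv
  refine ⟨A, B, hAm, hBm, ?_, hAg, hBg⟩
  ext ⟨mx, my⟩
  simp only [Set.mem_setOf_eq, Set.mem_prod, hAr, hBr]
  constructor
  · intro hj
    obtain ⟨k, l, r, s, hkl, hrs, he⟩ := hj
    constructor
    · rw [← colc hn hc mx my]
      rw [he]; simp [junctionTile]
    · show (c (0, my)).left.1 = 0
      rw [← rowc hn hc my mx]
      rw [he]; simp [junctionTile]
  · rintro ⟨hb, hl⟩
    exact posJ hn hc mx my hl hb
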